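/- The girth of the Tanner graph of any 2N × n_v·N matrix H₂ consisting of two block rows of N × N permutation matrices is divisible by 4. -/

import Mathlib

open Matrix

/-- The permutation matrix (over ℕ) associated with a permutation. -/
def permMatrix {N : ℕ} (σ : Equiv.Perm (Fin N)) : Matrix (Fin N) (Fin N) ℕ :=
  Matrix.of fun i j => if σ i = j then 1 else 0

/-- The Tanner graph of an ℕ-valued matrix: the bipartite simple graph on rows ⊕ columns
with an edge between row `i` and column `j` whenever `M i j ≠ 0`. -/
def tanner {α β : Type*} (M : Matrix α β ℕ) : SimpleGraph (α ⊕ β) :=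
  SimpleGraph.fromRel fun u v => ∃ i j, u = Sum.inl i ∧ v = Sum.inr j ∧ M i j ≠ 0

open Classical in
/-- The girth of the Tanner (multi)graph of an ℕ-valued matrix: an entry `≥ 2` is a
multiple edge, giving girth `2`; otherwise the girth of the Tanner simple graph
(`⊤` if there is no cycle). -/
noncomputable def matGirth {α β : Type*} (M : Matrix α β ℕ) : ℕ∞ :=
  if ∃ i j, 2 ≤ M i j then 2 else (tanner M).egirth


/-- The block matrix with two block rows of permutation matrices. -/
def H2mat2 {N nv : ℕ} (P Q : Fin nv → Equiv.Perm (Fin N)) :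
    Matrix (Fin 2 × Fin N) (Fin nv × Fin N) ℕ :=
  Matrix.of fun p q =>
    if p.1 = 0 then permMatrix (P q.1) p.2 q.2 else permMatrix (Q q.1) p.2 q.2


section Aux
variable {N nv : ℕ} {P Q : Fin nv → Equiv.Perm (Fin N)}

lemma not_adj_inl_inl (x y : Fin 2 × Fin N) :
    ¬ (tanner (H2mat2 P Q)).Adj (Sum.inl x) (Sum.inl y) := by
  simp [tanner, SimpleGraph.fromRel_adj]

lemma not_adj_inr_inr (x y : Fin nv × Fin N) :
    ¬ (tanner (H2mat2 P Q)).Adj (Sum.inr x) (Sum.inr y) := by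
  simp [tanner, SimpleGraph.fromRel_adj]

lemma adj_inl_inr (r : Fin 2 × Fin N) (q : Fin nv × Fin N) :
    (tanner (H2mat2 P Q)).Adj (Sum.inl r) (Sum.inr q) ↔
      (if r.1 = 0 then P q.1 r.2 = q.2 else Q q.1 r.2 = q.2) := by
  simp only [tanner, SimpleGraph.fromRel_adj, H2mat2, permMatrix, Matrix.of_apply]
  constructor
  · rintro ⟨-, h | h⟩
    · obtain ⟨i, j, hi, hj, hne⟩ := h
      cases hi; cases hj
      split_ifs at hne ⊢ <;> simp_all
    · obtain ⟨i, j, hi, hj, hne⟩ := h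
      exact absurd hi (by simp)
  · intro h
    refine ⟨by simp, Or.inl ⟨r, q, rfl, rfl, ?_⟩⟩
    split_ifs at h ⊢ <;> simp_all

lemma block_ne {r r' : Fin 2 × Fin N} {q : Fin nv × Fin N}
    (h1 : (tanner (H2mat2 P Q)).Adj (Sum.inl r) (Sum.inr q))
    (h2 : (tanner (H2mat2 P Q)).Adj (Sum.inl r') (Sum.inr q))
    (hne : r ≠ r') : r.1 ≠ r'.1 := by
  intro hb
  rw [adj_inl_inr] at h1 h2
  apply hne
  rw [hb] at h1
  refine Prod.ext hb ?_
  split_ifs at h1 h2 with hc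
  · exact (P q.1).injective (h1.trans h2.symm)
  · exact (Q q.1).injective (h1.trans h2.symm)

lemma key (n : ℕ) : ∀ (r r₀ : Fin 2 × Fin N)
    (w : (tanner (H2mat2 P Q)).Walk (Sum.inl r) (Sum.inl r₀)),
    w.IsTrail → w.length = n → ∃ m, n = 2 * m ∧ (r₀.1 = r.1 ↔ Even m) := by
  induction n using Nat.strong_induction_on with
  | _ n ih =>
    intro r r₀ w ht hl
    cases w with
    | nil => exact ⟨0, by simpa using hl.symm, by simp⟩
    | cons h1 w' =>
      rename_i v
      match v with
      | Sum.inl r' => exact absurd h1 (not_adj_inl_inl _ _)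
      | Sum.inr q =>
        cases w' with
        | cons h2 w'' =>
          rename_i v'
          match v' with
          | Sum.inr q' => exact absurd h2 (not_adj_inr_inr _ _)
          | Sum.inl r'' =>
            have hrr : r ≠ r'' := by
              intro he
              subst he
              have := ht.edges_nodup
              simp only [SimpleGraph.Walk.edges_cons, List.nodup_cons, List.mem_cons] at this
              exact this.1 (Or.inl (Sym2.eq_swap))
            have hbne : r.1 ≠ r''.1 := block_ne h1 (h2.symm) hrr
            simp only [SimpleGraph.Walk.length_cons] at hl
            obtain ⟨m, hm, hiff⟩ := ih (n - 2) (by omega) r'' r₀ w''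
              (ht.of_cons.of_cons) (by omega)
            refine ⟨m + 1, by omega, ?_⟩
            have hfin : ∀ a b c : Fin 2, a ≠ b → (c = a ↔ ¬ c = b) := by decide
            rw [hfin r.1 r''.1 r₀.1 hbne, Nat.even_add_one, ← hiff]

lemma main_cycle (r : Fin 2 × Fin N) (w : (tanner (H2mat2 P Q)).Walk (Sum.inl r) (Sum.inl r))
    (hc : w.IsCycle) : ∃ k, w.length = 4 * k := by
  obtain ⟨m, hm, hiff⟩ := key w.length r r w hc.isCircuit.isTrail rfl
  obtain ⟨j, hj⟩ := hiff.mp rfl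
  exact ⟨j, by omega⟩

end Aux

theorem stmt7 {N nv : ℕ} (P Q : Fin nv → Equiv.Perm (Fin N))
    (hcyc : (tanner (H2mat2 P Q)).egirth ≠ ⊤) :
    ∃ k : ℕ, (tanner (H2mat2 P Q)).egirth = ((4 * k : ℕ) : ℕ∞) := by
  have hac : ¬ (tanner (H2mat2 P Q)).IsAcyclic :=
    fun h => hcyc (SimpleGraph.egirth_eq_top.mpr h)
  obtain ⟨a, w, hc, he⟩ := SimpleGraph.exists_egirth_eq_length.mpr hac
  match a with
  | Sum.inl r =>
    obtain ⟨k, hk⟩ := main_cycle r w hc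
    exact ⟨k, by rw [he, hk]⟩
  | Sum.inr q =>
    cases w with
    | nil => exact absurd rfl hc.ne_nil
    | cons h1 w' =>
      rename_i v
      match v with
      | Sum.inr q' => exact absurd h1 (not_adj_inr_inr _ _)
      | Sum.inl r =>
        have hv : Sum.inl r ∈ (SimpleGraph.Walk.cons h1 w').support := by
          rw [SimpleGraph.Walk.support_cons]
          exact List.mem_cons_of_mem _ w'.start_mem_support
        obtain ⟨k, hk⟩ := main_cycle r ((SimpleGraph.Walk.cons h1 w').rotate _ hv) (hc.rotate hv)
        have hlen : ((SimpleGraph.Walk.cons h1 w').rotate _ hv).length =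
            (SimpleGraph.Walk.cons h1 w').length := by
          rw [← SimpleGraph.Walk.length_darts, ← SimpleGraph.Walk.length_darts,
            (SimpleGraph.Walk.rotate_darts _ _ hv).perm.length_eq]
        exact ⟨k, by rw [he, ← hlen, hk]⟩
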